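/- Let t be a positive integer. The set Ξ(t) = {ξ mod 2t : ξ² ≡ 1 mod 4t} forms a group under multiplication modulo 2t, and this group is isomorphic to (ℤ/2ℤ)^{ν(t)}, where ν(t) is the number of distinct prime divisors of t. -/

import Mathlib

private noncomputable def XiG (n : ℕ) : ℕ := Nat.card {x : ZMod n // x ^ 2 = 1}

private lemma XiG_mul {m n : ℕ} (h : m.Coprime n) : XiG (m * n) = XiG m * XiG n := by
  have e := ZMod.chineseRemainder h
  have e1 : {x : ZMod (m*n) // x ^ 2 = 1} ≃ {y : ZMod m × ZMod n // y ^ 2 = 1} :=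
    e.toEquiv.subtypeEquiv (fun x => by
      show x ^ 2 = 1 ↔ e x ^ 2 = 1
      constructor
      · intro hx; rw [← map_pow, hx, map_one]
      · intro hx
        have : e (x ^ 2) = e 1 := by rw [map_pow, map_one, hx]
        exact e.injective this)
  have e2 : {y : ZMod m × ZMod n // y ^ 2 = 1} ≃
      {a : ZMod m // a ^ 2 = 1} × {b : ZMod n // b ^ 2 = 1} :=
    (Equiv.subtypeEquivRight (fun y => by
      rw [Prod.ext_iff]; rfl)).trans (Equiv.subtypeProdEquivProd)
  rw [XiG, Nat.card_congr (e1.trans e2), Nat.card_prod]; rfl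

private lemma XiG_four : XiG 4 = 2 := by
  rw [XiG, Nat.card_eq_fintype_card]; decide

private lemma zmod_eq_iff {n : ℕ} {a b : ℤ} : (a : ZMod n) = b ↔ (n : ℤ) ∣ b - a := by
  rw [ZMod.intCast_eq_intCast_iff, Int.modEq_iff_dvd]

private lemma zmod_ne_of_lt {n : ℕ} {a b : ℤ} (h0 : 0 < b - a) (h1 : b - a < n) :
    (a : ZMod n) ≠ (b : ZMod n) := by
  rw [Ne, zmod_eq_iff]
  intro hd
  exact absurd (Int.le_of_dvd h0 hd) (not_le.2 h1)

private lemma card_subtype_eq_ncard {α : Type*} (p : α → Prop) :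
    Nat.card {x : α // p x} = ({x | p x} : Set α).ncard :=
  (Nat.card_coe_set_eq _)

private lemma sq_one_iff_dvd {n : ℕ} (z : ℤ) :
    ((z : ZMod n) ^ 2 = 1) ↔ (n : ℤ) ∣ z ^ 2 - 1 := by
  rw [show ((z : ZMod n) ^ 2 : ZMod n) = ((z ^ 2 : ℤ) : ZMod n) by push_cast; ring,
    show (1 : ZMod n) = ((1 : ℤ) : ZMod n) by push_cast; ring, zmod_eq_iff]
  constructor
  · intro h; have := (dvd_neg).2 h; simpa using this
  · intro h; have := (dvd_neg).2 h; simpa using this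

private lemma XiG_odd_pp {p k : ℕ} (hp : p.Prime) (hp2 : p ≠ 2) (hk : k ≠ 0) :
    XiG (p ^ k) = 2 := by
  have hp3 : 3 ≤ p := by have := hp.two_le; omega
  have hq : Prime (p : ℤ) := Nat.prime_iff_prime_int.mp hp
  have hset : {x : ZMod (p ^ k) | x ^ 2 = 1} = {((1:ℤ) : ZMod (p^k)), ((-1:ℤ) : ZMod (p^k))} := by
    ext x
    simp only [Set.mem_setOf_eq, Set.mem_insert_iff, Set.mem_singleton_iff]
    obtain ⟨z, rfl⟩ := ZMod.intCast_surjective x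
    rw [sq_one_iff_dvd]
    constructor
    · intro hdvd
      have hfac : ((p : ℤ)) ^ k ∣ (z - 1) * (z + 1) := by
        push_cast at hdvd ⊢
        convert hdvd using 1; ring
      by_cases hd : (p : ℤ) ∣ z + 1
      · have hnd : ¬ (p : ℤ) ∣ z - 1 := by
          intro hd2
          have : (p : ℤ) ∣ 2 := by
            have := dvd_sub hd hd2
            simpa using this
          have : (p : ℤ) ≤ 2 := Int.le_of_dvd (by norm_num) this
          omega
        right
        have : ((p:ℤ)) ^ k ∣ z + 1 := hq.pow_dvd_of_dvd_mul_left k hnd hfac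
        rw [zmod_eq_iff]
        push_cast
        convert Int.dvd_neg.mpr this using 1 <;> ring
      · left
        have : ((p:ℤ)) ^ k ∣ z - 1 := hq.pow_dvd_of_dvd_mul_right k hd hfac
        rw [zmod_eq_iff]
        push_cast
        convert Int.dvd_neg.mpr this using 1 <;> ring
    · rintro (h | h) <;> rw [zmod_eq_iff] at h <;> push_cast at h ⊢
      · obtain ⟨c, hc⟩ := h
        exact ⟨-c * (z + 1), by linear_combination (-(z + 1)) * hc⟩
      · obtain ⟨c, hc⟩ := h
        exact ⟨-c * (z - 1), by linear_combination (-(z - 1)) * hc⟩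
  have h3 : 3 ≤ p ^ k := le_trans hp3 (Nat.le_self_pow hk p)
  rw [XiG, card_subtype_eq_ncard, hset, Set.ncard_pair]
  refine (zmod_ne_of_lt (a := -1) (b := 1) (by norm_num) ?_).symm
  have : (3 : ℤ) ≤ (p ^ k : ℕ) := by exact_mod_cast h3
  push_cast at this ⊢
  omega

private lemma XiG_two_pp {k : ℕ} (hk : 3 ≤ k) : XiG (2 ^ k) = 4 := by
  obtain ⟨m, rfl⟩ : ∃ m, k = m + 3 := ⟨k - 3, by omega⟩
  set K := m + 3 with hK
  have hq : Prime (2 : ℤ) := Int.prime_two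
  -- the four roots as integers
  set a : ℤ := 2 ^ (m + 2) with ha
  have hNK : (((2 ^ K : ℕ)) : ℤ) = (2:ℤ) ^ K := by push_cast; ring
  have hsq : ∀ z : ℤ, (2:ℤ) ^ K ∣ z ^ 2 - 1 ↔
      ((z : ZMod (2 ^ K)) ^ 2 = 1) := fun z => by rw [sq_one_iff_dvd, hNK]
  have hset : {x : ZMod (2 ^ K) | x ^ 2 = 1} =
      {((1:ℤ) : ZMod (2^K)), ((-1:ℤ) : ZMod (2^K)),
       ((a+1 : ℤ) : ZMod (2^K)), ((a-1 : ℤ) : ZMod (2^K))} := by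
    ext x
    simp only [Set.mem_setOf_eq, Set.mem_insert_iff, Set.mem_singleton_iff]
    obtain ⟨z, rfl⟩ := ZMod.intCast_surjective x
    rw [← hsq]
    constructor
    · intro hdvd
      have hodd : Odd z := by
        rcases Int.even_or_odd z with he | ho
        · exfalso
          obtain ⟨w, rfl⟩ := he
          obtain ⟨c, hc⟩ := dvd_trans (dvd_pow_self (2:ℤ) (show K ≠ 0 by omega)) hdvd
          obtain ⟨A, hA⟩ : ∃ A : ℤ, A = w * w := ⟨_, rfl⟩
          have h' : 4 * A - 1 = 2 * c := by rw [hA]; linarith [hc, sq_nonneg (w + w)]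
          omega
        · exact ho
      obtain ⟨w, hw⟩ := hodd
      -- z = 2w+1, z^2-1 = 4 w (w+1)
      have hfac : (2:ℤ) ^ K ∣ 4 * (w * (w + 1)) := by
        rwa [show (4:ℤ) * (w * (w + 1)) = z ^ 2 - 1 by rw [hw]; ring]
      have hfac2 : (2:ℤ) ^ (m + 1) ∣ w * (w + 1) := by
        rcases hfac with ⟨c, hc⟩
        refine ⟨c, mul_left_cancel₀ (show (4:ℤ) ≠ 0 by norm_num) ?_⟩
        rw [hc, show K = (m+1)+2 from rfl]; ring
      rcases Int.even_or_odd w with hwe | hwo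
      · have hndvd : ¬ (2:ℤ) ∣ w + 1 := by
          rcases hwe with ⟨u, hu⟩; omega
        obtain ⟨c, hc⟩ := hq.pow_dvd_of_dvd_mul_right (m+1) hndvd hfac2
        rcases Int.even_or_odd c with ⟨i, hi⟩ | ⟨i, hi⟩
        · left; rw [zmod_eq_iff, hNK, show K = (m+2)+1 from rfl]
          exact ⟨-i, by linear_combination (-1) * hw + (-2) * hc + (-(2:ℤ)^(m+2)) * hi⟩
        · right; right; left; rw [zmod_eq_iff, hNK, ha, show K = (m+2)+1 from rfl]
          exact ⟨-i, by linear_combination (-1) * hw + (-2) * hc + (-(2:ℤ)^(m+2)) * hi⟩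
      · have hndvd : ¬ (2:ℤ) ∣ w := by
          rcases hwo with ⟨u, hu⟩; omega
        obtain ⟨c, hc⟩ := hq.pow_dvd_of_dvd_mul_left (m+1) hndvd hfac2
        rcases Int.even_or_odd c with ⟨i, hi⟩ | ⟨i, hi⟩
        · right; left; rw [zmod_eq_iff, hNK, show K = (m+2)+1 from rfl]
          exact ⟨-i, by linear_combination (-1) * hw + (-2) * hc + (-(2:ℤ)^(m+2)) * hi⟩
        · right; right; right; rw [zmod_eq_iff, hNK, ha, show K = (m+2)+1 from rfl]
          exact ⟨-i, by linear_combination (-1) * hw + (-2) * hc + (-(2:ℤ)^(m+2)) * hi⟩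
    · rintro (h | h | h | h) <;> rw [zmod_eq_iff, hNK] at h <;>
        [skip; skip; rw [ha] at h; rw [ha] at h] <;>
        rw [show K = (m+2)+1 from rfl] at h ⊢ <;> obtain ⟨c, hc⟩ := h
      · exact ⟨-c * (z + 1), by linear_combination (-(z + 1)) * hc⟩
      · exact ⟨-c * (z - 1), by linear_combination (-(z - 1)) * hc⟩
      · exact ⟨-c * (z + 2^(m+2) + 1) + 2^(m+1) + 1,
          by linear_combination (-(z + 2^(m+2) + 1)) * hc⟩
      · exact ⟨-c * (z + 2^(m+2) - 1) + 2^(m+1) - 1,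
          by linear_combination (-(z + 2^(m+2) - 1)) * hc⟩
  -- distinctness and counting
  have hbig : (8:ℤ) ≤ 2 ^ K := by
    calc (8:ℤ) = 2 ^ 3 := by norm_num
    _ ≤ 2 ^ K := pow_le_pow_right₀ (by norm_num) (by omega)
  have hahalf : 2 * a = 2 ^ K := by rw [ha]; rw [show K = (m+2)+1 by omega]; ring
  have ha4 : (4:ℤ) ≤ a := by
    calc (4:ℤ) = 2 ^ 2 := by norm_num
    _ ≤ 2 ^ (m+2) := pow_le_pow_right₀ (by norm_num) (by omega)
  have hd1 : ((1:ℤ) : ZMod (2^K)) ≠ ((-1:ℤ) : ZMod (2^K)) :=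
    (zmod_ne_of_lt (by norm_num) (by push_cast; linarith [hbig])).symm
  have hd2 : ((1:ℤ) : ZMod (2^K)) ≠ ((a+1:ℤ) : ZMod (2^K)) :=
    zmod_ne_of_lt (by linarith [ha4]) (by push_cast; linarith [hahalf, ha4])
  have hd3 : ((1:ℤ) : ZMod (2^K)) ≠ ((a-1:ℤ) : ZMod (2^K)) :=
    zmod_ne_of_lt (by linarith [ha4]) (by push_cast; linarith [hahalf, ha4])
  have hd4 : ((-1:ℤ) : ZMod (2^K)) ≠ ((a+1:ℤ) : ZMod (2^K)) :=
    zmod_ne_of_lt (by linarith [ha4]) (by push_cast; linarith [hahalf, ha4])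
  have hd5 : ((-1:ℤ) : ZMod (2^K)) ≠ ((a-1:ℤ) : ZMod (2^K)) :=
    zmod_ne_of_lt (by linarith [ha4]) (by push_cast; linarith [hahalf, ha4])
  have hd6 : ((a+1:ℤ) : ZMod (2^K)) ≠ ((a-1:ℤ) : ZMod (2^K)) :=
    (zmod_ne_of_lt (by norm_num) (by push_cast; linarith [hbig])).symm
  rw [XiG, card_subtype_eq_ncard, hset]
  rw [Set.ncard_insert_of_notMem (by
      simp only [Set.mem_insert_iff, Set.mem_singleton_iff]
      push_neg
      exact ⟨hd1, hd2, hd3⟩) (Set.toFinite _),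
    Set.ncard_insert_of_notMem (by
      simp only [Set.mem_insert_iff, Set.mem_singleton_iff]
      push_neg
      exact ⟨hd4, hd5⟩) (Set.toFinite _),
    Set.ncard_pair hd6]

private lemma XiG_one : XiG 1 = 1 := by
  rw [XiG, Nat.card_eq_fintype_card]; decide

private lemma XiG_formula (t : ℕ) (ht : 0 < t) : XiG (4 * t) = 2 ^ (t.primeFactors.card + 1) := by
  have ht0 : t ≠ 0 := ht.ne'
  have h40 : (4:ℕ) ≠ 0 := by norm_num
  have hfact : (4 * t).factorization = Finsupp.single 2 2 + t.factorization := by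
    rw [Nat.factorization_mul h40 ht0, show (4:ℕ) = 2 ^ 2 from rfl,
      Nat.Prime.factorization_pow Nat.prime_two]
  have he : ∀ p : ℕ, p ≠ 2 → (4 * t).factorization p = t.factorization p := by
    intro p hp
    rw [hfact, Finsupp.add_apply, Finsupp.single_apply, if_neg (fun h => hp h.symm), zero_add]
  have he2 : (4 * t).factorization 2 = 2 + t.factorization 2 := by
    rw [hfact, Finsupp.add_apply, Finsupp.single_apply, if_pos rfl]
  have hpf : (4 * t).primeFactors = insert 2 t.primeFactors := by
    rw [Nat.primeFactors_mul h40 ht0, show (4:ℕ).primeFactors = {2} by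
        rw [show (4:ℕ) = 2 ^ 2 from rfl]
        exact Nat.primeFactors_prime_pow (by norm_num) Nat.prime_two,
      ← Finset.insert_eq]
  rw [Nat.multiplicative_factorization XiG (fun a b h => XiG_mul h) XiG_one
    (by positivity)]
  rw [Finsupp.prod, Nat.support_factorization, hpf]
  have hodd : ∀ p ∈ t.primeFactors.erase 2, XiG (p ^ (4 * t).factorization p) = 2 := by
    intro p hp
    have hp2 : p ≠ 2 := Finset.ne_of_mem_erase hp
    have hpmem := Finset.mem_of_mem_erase hp
    have hpp : p.Prime := Nat.prime_of_mem_primeFactors hpmem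
    have hpos : t.factorization p ≠ 0 := by
      have : p ∈ t.factorization.support := by rwa [Nat.support_factorization]
      exact Finsupp.mem_support_iff.mp this
    rw [he p hp2]
    exact XiG_odd_pp hpp hp2 hpos
  by_cases h2t : 2 ∈ t.primeFactors
  · have hc1 : 1 ≤ t.primeFactors.card := Finset.card_pos.mpr ⟨2, h2t⟩
    rw [Finset.insert_eq_self.mpr h2t, ← Finset.mul_prod_erase _ _ h2t,
      Finset.prod_congr rfl hodd, Finset.prod_const, Finset.card_erase_of_mem h2t]
    have hpos2 : t.factorization 2 ≠ 0 := by
      have : 2 ∈ t.factorization.support := by rwa [Nat.support_factorization]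
      exact Finsupp.mem_support_iff.mp this
    rw [he2, XiG_two_pp (by omega), show (4:ℕ) = 2^2 from rfl, ← pow_add]
    congr 1
    omega
  · have herase : t.primeFactors.erase 2 = t.primeFactors := Finset.erase_eq_of_notMem h2t
    rw [Finset.prod_insert h2t]
    have h20 : t.factorization 2 = 0 :=
      Finsupp.notMem_support_iff.mp (by rwa [Nat.support_factorization])
    have hodd' : ∀ p ∈ t.primeFactors, XiG (p ^ (4 * t).factorization p) = 2 := by
      intro p hp; exact hodd p (by rw [herase]; exact hp)
    rw [he2, h20, show XiG (2 ^ (2 + 0)) = 2 from XiG_four,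
      Finset.prod_congr rfl hodd', Finset.prod_const, pow_succ, mul_comm]

private def sqSub (n : ℕ) : Subgroup (ZMod n)ˣ where
  carrier := {u | u ^ 2 = 1}
  one_mem' := one_pow 2
  mul_mem' := fun {a b} ha hb => by
    simp only [Set.mem_setOf_eq] at *
    rw [mul_pow, ha, hb, mul_one]
  inv_mem' := fun {a} ha => by
    simp only [Set.mem_setOf_eq] at *
    rw [inv_pow, ha, inv_one]

private lemma mem_sqSub {n : ℕ} {u : (ZMod n)ˣ} : u ∈ sqSub n ↔ u ^ 2 = 1 := Iff.rfl

private noncomputable def sqEquiv (n : ℕ) : sqSub n ≃ {x : ZMod n // x ^ 2 = 1} where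
  toFun u := ⟨(u : (ZMod n)ˣ), by
    rw [← Units.val_pow_eq_pow_val, mem_sqSub.mp u.2, Units.val_one]⟩
  invFun x := ⟨⟨x.1, x.1, by rw [← sq]; exact x.2, by rw [← sq]; exact x.2⟩, by
    rw [mem_sqSub]
    ext
    rw [Units.val_pow_eq_pow_val]
    exact x.2⟩
  left_inv u := by ext; rfl
  right_inv x := rfl

private lemma card_sqSub (n : ℕ) : Nat.card (sqSub n) = XiG n :=
  Nat.card_congr (sqEquiv n)

private lemma key_lift {t : ℕ} (x z : ℤ) (h : (2 * (t:ℤ)) ∣ x - z) :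
    (4 * (t:ℤ)) ∣ (x ^ 2 - 1) - (z ^ 2 - 1) := by
  obtain ⟨k, hk⟩ := h
  exact ⟨k * z + t * k ^ 2, by linear_combination (x + z + 2 * t * k) * hk⟩

/-- For `t > 0`, the set `Ξ(t) = {ξ mod 2t : ξ² ≡ 1 mod 4t}` is (the underlying set
of units of) a subgroup of `(ℤ/2tℤ)ˣ`, and this group is isomorphic to
`(ℤ/2ℤ)^{ν(t)}` where `ν(t)` is the number of distinct prime divisors of `t`. -/
theorem Xi_group_iso_elementary_two_group (t : ℕ) (ht : 0 < t) :
    ∃ H : Subgroup (ZMod (2 * t))ˣ,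
      (∀ ξ : ZMod (2 * t),
        (∀ x : ℤ, (x : ZMod (2 * t)) = ξ → (4 * (t : ℤ)) ∣ x ^ 2 - 1) ↔
          ∃ u ∈ H, ((u : (ZMod (2 * t))ˣ) : ZMod (2 * t)) = ξ) ∧
      Nonempty (H ≃* (Fin t.primeFactors.card → Multiplicative (ZMod 2))) := by
  have hdvd : (2 * t) ∣ (4 * t) := ⟨2, by ring⟩
  have hcast4 : ((4 * t : ℕ) : ℤ) = 4 * (t : ℤ) := by push_cast; ring
  have hcast2 : ((2 * t : ℕ) : ℤ) = 2 * (t : ℤ) := by push_cast; ring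
  set ψ : (ZMod (4 * t))ˣ →* (ZMod (2 * t))ˣ :=
    Units.map (ZMod.castHom hdvd (ZMod (2 * t))).toMonoidHom with hψ
  set φ : (sqSub (4 * t)) →* (ZMod (2 * t))ˣ := ψ.comp (sqSub (4 * t)).subtype with hφ
  refine ⟨φ.range, ?_, ?_⟩
  · -- the characterization
    intro ξ
    constructor
    · intro hξ
      obtain ⟨z, hz⟩ := ZMod.intCast_surjective ξ
      have hdz : (4 * (t:ℤ)) ∣ z ^ 2 - 1 := hξ z hz
      have hy : ((z : ZMod (4 * t))) ^ 2 = 1 := by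
        rw [sq_one_iff_dvd, hcast4]; exact hdz
      have hy' : (z : ZMod (4 * t)) * (z : ZMod (4 * t)) = 1 := by rw [← sq]; exact hy
      set v : (ZMod (4 * t))ˣ := ⟨(z : ZMod (4 * t)), (z : ZMod (4 * t)), hy', hy'⟩ with hv
      have hvmem : v ∈ sqSub (4 * t) := by
        rw [mem_sqSub]; ext; rw [Units.val_pow_eq_pow_val]; exact hy
      refine ⟨φ ⟨v, hvmem⟩, ⟨⟨v, hvmem⟩, rfl⟩, ?_⟩
      show ((ZMod.castHom hdvd (ZMod (2 * t))) (z : ZMod (4 * t))) = ξ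
      rw [map_intCast]; exact hz
    · rintro ⟨u, ⟨⟨v, hvmem⟩, rfl⟩, hu⟩ x hx
      obtain ⟨z, hz⟩ := ZMod.intCast_surjective ((v : (ZMod (4 * t))ˣ) : ZMod (4 * t))
      have hzsq : (4 * (t:ℤ)) ∣ z ^ 2 - 1 := by
        rw [← hcast4, ← sq_one_iff_dvd, hz, ← Units.val_pow_eq_pow_val,
          mem_sqSub.mp hvmem, Units.val_one]
      have hxz : (2 * (t:ℤ)) ∣ x - z := by
        have h1 : ((z : ZMod (2 * t))) = (x : ZMod (2 * t)) := by
          rw [hx, ← hu]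
          show _ = ((ZMod.castHom hdvd (ZMod (2 * t))) ((v : (ZMod (4 * t))ˣ) : ZMod (4 * t)))
          rw [← hz, map_intCast]
        rw [zmod_eq_iff, hcast2] at h1
        exact h1
      have h2 := dvd_add (key_lift x z hxz) hzsq
      simpa using h2
  · -- the isomorphism
    have hNe : NeZero (2 * t) := ⟨by omega⟩
    have ht' : (1:ℤ) ≤ (t:ℤ) := by exact_mod_cast ht
    have hker : Nat.card φ.ker = 2 := by
      have hwsq : ((2*(t:ℤ)+1 : ℤ) : ZMod (4*t)) * ((2*(t:ℤ)+1 : ℤ) : ZMod (4*t)) = 1 := by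
        rw [← sq, sq_one_iff_dvd, hcast4]
        exact ⟨t + 1, by ring⟩
      set w : (ZMod (4*t))ˣ :=
        ⟨((2*(t:ℤ)+1 : ℤ) : ZMod (4*t)), ((2*(t:ℤ)+1 : ℤ) : ZMod (4*t)), hwsq, hwsq⟩ with hw
      have hwmem : w ∈ sqSub (4*t) := by
        rw [mem_sqSub]; ext; rw [Units.val_pow_eq_pow_val, ← sq] at *; exact hwsq
      have hwker : (⟨w, hwmem⟩ : sqSub (4*t)) ∈ φ.ker := by
        rw [MonoidHom.mem_ker]
        ext
        show ((ZMod.castHom hdvd (ZMod (2 * t))) ((2*(t:ℤ)+1 : ℤ) : ZMod (4*t))) = 1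
        rw [map_intCast, show (1 : ZMod (2*t)) = ((1:ℤ) : ZMod (2*t)) by push_cast; ring,
          zmod_eq_iff, hcast2]
        exact ⟨-1, by ring⟩
      rw [Nat.card_eq_two_iff]
      refine ⟨1, ⟨⟨w, hwmem⟩, hwker⟩, ?_, ?_⟩
      · intro hcontra
        have h1 : (1 : (ZMod (4*t))ˣ) = w := by
          have := congrArg (fun x => ((x : φ.ker) : sqSub (4*t)) : φ.ker → (ZMod (4*t))ˣ) hcontra
          exact this
        have hval : ((1:ℤ) : ZMod (4*t)) = ((2*(t:ℤ)+1 : ℤ) : ZMod (4*t)) := by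
          have := congrArg Units.val h1
          simpa [hw] using this
        exact zmod_ne_of_lt (by omega) (by rw [hcast4]; omega) hval
      · rw [Set.eq_univ_iff_forall]
        rintro ⟨⟨u, humem⟩, huker⟩
        rw [MonoidHom.mem_ker] at huker
        have huval : ((ZMod.castHom hdvd (ZMod (2 * t))) ((u : (ZMod (4*t))ˣ) : ZMod (4*t))) = 1 :=
          congrArg Units.val huker
        obtain ⟨z, hz⟩ := ZMod.intCast_surjective ((u : (ZMod (4*t))ˣ) : ZMod (4*t))
        rw [← hz, map_intCast] at huval
        rw [show (1 : ZMod (2*t)) = ((1:ℤ) : ZMod (2*t)) by push_cast; ring] at huval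
        have hzz : (2*(t:ℤ)) ∣ 1 - z := by
          rw [← hcast2]
          have := (zmod_eq_iff.mp huval)
          exact this
        obtain ⟨k, hk⟩ := hzz
        simp only [Set.mem_insert_iff, Set.mem_singleton_iff]
        rcases Int.even_or_odd k with ⟨i, hi⟩ | ⟨i, hi⟩
        · left
          refine Subtype.ext (Subtype.ext (Units.ext ?_))
          show (u : (ZMod (4*t))ˣ).val = 1
          rw [← hz, show (1 : ZMod (4*t)) = ((1:ℤ) : ZMod (4*t)) by push_cast; ring,
            zmod_eq_iff, hcast4]
          exact ⟨i, by linear_combination hk + 2 * (t:ℤ) * hi⟩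
        · right
          refine Subtype.ext (Subtype.ext (Units.ext ?_))
          show (u : (ZMod (4*t))ˣ).val = ((2*(t:ℤ)+1 : ℤ) : ZMod (4*t))
          rw [← hz, zmod_eq_iff, hcast4]
          exact ⟨i + 1, by linear_combination hk + 2 * (t:ℤ) * hi⟩
    have hcard : Nat.card φ.range = 2 ^ t.primeFactors.card := by
      have h1 : Nat.card (sqSub (4 * t)) = Nat.card (sqSub (4*t) ⧸ φ.ker) * Nat.card φ.ker :=
        Subgroup.card_eq_card_quotient_mul_card_subgroup φ.ker
      have h2 : Nat.card (sqSub (4*t) ⧸ φ.ker) = Nat.card φ.range :=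
        Nat.card_congr (QuotientGroup.quotientKerEquivRange φ).toEquiv
      rw [card_sqSub, XiG_formula t ht, h2, hker, pow_succ] at h1
      exact (Nat.mul_right_cancel (by norm_num) h1.symm)
    have hsq1 : ∀ u : φ.range, u ^ 2 = 1 := by
      rintro ⟨u, v, rfl⟩
      have hv : v ^ 2 = 1 := by
        refine Subtype.ext ?_
        rw [SubmonoidClass.coe_pow]
        exact mem_sqSub.mp v.2
      refine Subtype.ext ?_
      rw [SubmonoidClass.coe_pow]
      show (φ v) ^ 2 = 1
      rw [← map_pow, hv, map_one]
    letI : Module (ZMod 2) (Additive φ.range) := AddCommGroup.zmodModule (by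
      intro x
      refine Additive.toMul.injective ?_
      rw [toMul_nsmul]
      exact hsq1 x.toMul)
    haveI : Finite (Additive φ.range) := by
      have : Finite φ.range := inferInstance
      exact this
    haveI : Module.Finite (ZMod 2) (Additive φ.range) := Module.Finite.of_finite
    let b := Module.finBasis (ZMod 2) (Additive φ.range)
    set d := Module.finrank (ZMod 2) (Additive φ.range) with hdd
    have hcard2 : Nat.card φ.range = 2 ^ d := by
      have e0 : φ.range ≃ Additive φ.range := Additive.ofMul
      rw [Nat.card_congr (e0.trans b.equivFun.toEquiv), Nat.card_pi]
      simp [Nat.card_zmod]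
    have hd : d = t.primeFactors.card := by
      refine Nat.pow_right_injective (le_refl 2) ?_
      show 2 ^ d = 2 ^ t.primeFactors.card
      rw [← hcard2, hcard]
    let e := (b.reindex (finCongr hd)).equivFun
    exact ⟨(MulEquiv.multiplicativeAdditive φ.range).symm.trans
      ((AddEquiv.toMultiplicative e.toAddEquiv).trans (MulEquiv.funMultiplicative _ _))⟩
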